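/- Fix integers l ≥ 0, j ≥ 1, and 1 ≤ n ≤ m with 2l + j = n + m - 1, l ≤ n - 1. Then (n - l) · C(j, n - l) = Σ_{k=1}^{n} (m - n + 2k - 1) · C(j, n - k - l). -/

import Mathlib

/-- Binomial coefficient on integers, with the convention `C a b = 0` when
`b < 0` or `b > a`. -/
def C (a b : ℤ) : ℤ := if 0 ≤ b ∧ b ≤ a then (a.toNat.choose b.toNat : ℤ) else 0

lemma aux (jn : ℕ) : ∀ p, p ≤ jn →
    (p : ℤ) * (jn.choose p : ℤ) =
      ∑ i ∈ Finset.range p, ((jn : ℤ) - 2 * i) * (jn.choose i : ℤ) := by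
  intro p
  induction p with
  | zero => simp
  | succ p ih =>
    intro hp
    rw [Finset.sum_range_succ, ← ih (by omega)]
    have h := Nat.choose_succ_right_eq jn p
    have hc : ((jn.choose (p + 1)) : ℤ) * (p + 1) = (jn.choose p : ℤ) * ((jn : ℤ) - p) := by
      have h2 : ((jn - p : ℕ) : ℤ) = (jn : ℤ) - p := by omega
      rw [← h2]
      exact_mod_cast h
    push_cast
    linarith [hc]

theorem combinatorial_identity (l j n m : ℤ) (hl : 0 ≤ l) (hj : 1 ≤ j)
    (hn : 1 ≤ n) (hnm : n ≤ m) (hdeg : 2 * l + j = n + m - 1) (hln : l ≤ n - 1) :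
    (n - l) * C j (n - l) = ∑ k ∈ Finset.Icc (1 : ℤ) n, (m - n + 2 * k - 1) * C j (n - k - l) := by
  set q := n - l with hqdef
  have hq1 : 1 ≤ q := by omega
  have hqj : q ≤ j := by omega
  -- restrict the sum to Icc 1 q, the other terms vanish
  have hsub : ∑ k ∈ Finset.Icc (1 : ℤ) n, (m - n + 2 * k - 1) * C j (n - k - l)
      = ∑ k ∈ Finset.Icc (1 : ℤ) q, (m - n + 2 * k - 1) * C j (n - k - l) := by
    refine (Finset.sum_subset (Finset.Icc_subset_Icc_right (by omega)) ?_).symm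
    intro x hx hnx
    simp only [Finset.mem_Icc] at hx hnx
    have : n - x - l < 0 := by omega
    rw [C, if_neg (by omega)]
    ring
  rw [hsub]
  -- reindex via i = q - k
  have hbij : ∑ k ∈ Finset.Icc (1 : ℤ) q, (m - n + 2 * k - 1) * C j (n - k - l)
      = ∑ i ∈ Finset.range q.toNat, ((j.toNat : ℤ) - 2 * i) * (j.toNat.choose i : ℤ) := by
    refine Finset.sum_nbij' (i := fun k => (q - k).toNat) (j := fun i => q - (i : ℤ)) ?_ ?_ ?_ ?_ ?_
    · intro a ha
      simp only [Finset.mem_Icc] at ha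
      simp only [Finset.mem_range]
      omega
    · intro a ha
      simp only [Finset.mem_range] at ha
      simp only [Finset.mem_Icc]
      omega
    · intro a ha
      simp only [Finset.mem_Icc] at ha
      omega
    · intro a ha
      simp only [Finset.mem_range] at ha
      omega
    · intro a ha
      simp only [Finset.mem_Icc] at ha
      have h1 : (0:ℤ) ≤ n - a - l := by omega
      have h2 : n - a - l ≤ j := by omega
      rw [C, if_pos ⟨h1, h2⟩]
      have hcoef : m - n + 2 * a - 1 = (j.toNat : ℤ) - 2 * ((q - a).toNat : ℤ) := by
        have : (j.toNat : ℤ) = j := Int.toNat_of_nonneg (by omega)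
        have : ((q - a).toNat : ℤ) = q - a := Int.toNat_of_nonneg (by omega)
        omega
      have hch : (n - a - l).toNat = (q - a).toNat := by omega
      rw [hcoef, hch]
  rw [hbij, ← aux j.toNat q.toNat (by omega)]
  rw [C, if_pos ⟨by omega, by omega⟩]
  have h1 : (q.toNat : ℤ) = q := Int.toNat_of_nonneg (by omega)
  rw [h1]
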